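/- Let α > 1. For every λ ∈ ℝ the improper Riemann integral F₃(λ) := lim_{R→∞} ∫_{−R}^{R} sgn(ξ) e^{−i·sgn(ξ)·π/4} e^{i(λξ + ξ|ξ|^α)} dξ exists; the function F₃ : ℝ → ℂ is continuous, and F₃(λ) → 0 as |λ| → ∞. -/

import Mathlib

open MeasureTheory Filter

section Aux
open Set intervalIntegral Complex

lemma vdc1 {a b δ : ℝ} (hab : a ≤ b) (hδ : 0 < δ)
    (φ g g' : ℝ → ℝ)
    (hφ : ∀ ξ ∈ Set.uIcc a b, HasDerivAt φ (g ξ) ξ)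
    (hg : ∀ ξ ∈ Set.uIcc a b, HasDerivAt g (g' ξ) ξ)
    (hg'c : ContinuousOn g' (Set.uIcc a b))
    (hg'0 : ∀ ξ ∈ Set.uIcc a b, 0 ≤ g' ξ)
    (hgδ : ∀ ξ ∈ Set.uIcc a b, δ ≤ |g ξ|) :
    ‖∫ ξ in a..b, Complex.exp (Complex.I * (φ ξ : ℂ))‖ ≤ 4 / δ := by
  have hicc : Set.uIcc a b = Set.Icc a b := Set.uIcc_of_le hab
  have hgc : ContinuousOn g (Set.uIcc a b) :=
    fun ξ hξ => (hg ξ hξ).continuousAt.continuousWithinAt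
  have hφc : ContinuousOn φ (Set.uIcc a b) :=
    fun ξ hξ => (hφ ξ hξ).continuousAt.continuousWithinAt
  have hgne : ∀ ξ ∈ Set.uIcc a b, g ξ ≠ 0 := by
    intro ξ hξ h0
    have := hgδ ξ hξ
    rw [h0] at this; simp at this; linarith
  set E : ℝ → ℂ := fun ξ => Complex.exp (Complex.I * (φ ξ : ℂ)) with hE
  have hEderiv : ∀ ξ ∈ Set.uIcc a b,
      HasDerivAt E (Complex.I * (g ξ : ℂ) * E ξ) ξ := by
    intro ξ hξ
    have h1 : HasDerivAt (fun ξ : ℝ => Complex.I * (φ ξ : ℂ)) (Complex.I * (g ξ : ℂ)) ξ :=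
      ((hφ ξ hξ).ofReal_comp).const_mul Complex.I
    simpa [hE, mul_comm] using h1.cexp
  set r : ℝ → ℝ := fun ξ => (g ξ)⁻¹ with hr
  set r' : ℝ → ℝ := fun ξ => -g' ξ / (g ξ) ^ 2 with hr'
  have hrderiv : ∀ ξ ∈ Set.uIcc a b, HasDerivAt r (r' ξ) ξ := by
    intro ξ hξ
    exact (hg ξ hξ).inv (hgne ξ hξ)
  set u : ℝ → ℂ := fun ξ => (-Complex.I) * (r ξ : ℂ) with hu
  set u' : ℝ → ℂ := fun ξ => (-Complex.I) * (r' ξ : ℂ) with hu'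
  have huderiv : ∀ ξ ∈ Set.uIcc a b, HasDerivAt u (u' ξ) ξ := by
    intro ξ hξ
    exact ((hrderiv ξ hξ).ofReal_comp).const_mul (-Complex.I)
  have hEnorm : ∀ ξ : ℝ, ‖E ξ‖ = 1 := by
    intro ξ
    simp [hE, Complex.norm_exp]
  have hunorm : ∀ ξ ∈ Set.uIcc a b, ‖u ξ‖ ≤ 1 / δ := by
    intro ξ hξ
    have h1 : ‖u ξ‖ = |g ξ|⁻¹ := by
      simp [hu, hr, abs_inv]
    rw [h1, ← one_div]
    exact one_div_le_one_div_of_le hδ (hgδ ξ hξ)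
  -- IBP
  have hrc : ContinuousOn r (Set.uIcc a b) := hgc.inv₀ hgne
  have hr'c : ContinuousOn r' (Set.uIcc a b) :=
    (hg'c.neg).div (hgc.pow 2) (fun ξ hξ => pow_ne_zero 2 (hgne ξ hξ))
  have hu'int : IntervalIntegrable u' volume a b := by
    apply ContinuousOn.intervalIntegrable
    exact (Complex.continuous_ofReal.comp_continuousOn hr'c).const_smul (-Complex.I) |>.congr
      (fun ξ hξ => by simp [hu', smul_eq_mul])
  have hv'int : IntervalIntegrable (fun ξ => Complex.I * (g ξ : ℂ) * E ξ) volume a b := by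
    apply ContinuousOn.intervalIntegrable
    have : ContinuousOn (fun ξ : ℝ => (g ξ : ℂ)) (Set.uIcc a b) :=
      Complex.continuous_ofReal.comp_continuousOn hgc
    exact (this.const_smul Complex.I |>.congr (fun ξ hξ => by simp [smul_eq_mul])).mul
      (Complex.continuous_exp.comp_continuousOn
        ((Complex.continuous_ofReal.comp_continuousOn hφc).const_smul Complex.I |>.congr
          (fun ξ hξ => by simp [smul_eq_mul])))
  have hibp := intervalIntegral.integral_mul_deriv_eq_deriv_mul huderiv hEderiv hu'int hv'int
  have hcongr : (∫ ξ in a..b, E ξ) = ∫ ξ in a..b, u ξ * (Complex.I * (g ξ : ℂ) * E ξ) := by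
    apply intervalIntegral.integral_congr
    intro ξ hξ
    have hne : (g ξ : ℂ) ≠ 0 := Complex.ofReal_ne_zero.mpr (hgne ξ hξ)
    show E ξ = -I * (((g ξ)⁻¹ : ℝ) : ℂ) * (I * (g ξ : ℂ) * E ξ)
    rw [Complex.ofReal_inv]
    have h' : -I * ((g ξ : ℂ))⁻¹ * (I * (g ξ : ℂ) * E ξ)
        = (-(I*I)) * ((g ξ : ℂ)⁻¹ * g ξ) * E ξ := by ring
    rw [h', Complex.I_mul_I, inv_mul_cancel₀ hne]; ring
  have hnormr : ∀ ξ ∈ Set.uIcc a b, |r ξ| ≤ 1 / δ := by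
    intro ξ hξ
    rw [hr]
    simp only [abs_inv]
    rw [← one_div]
    exact one_div_le_one_div_of_le hδ (hgδ ξ hξ)
  have h2 : ‖∫ ξ in a..b, u' ξ * E ξ‖ ≤ ∫ ξ in a..b, g' ξ / (g ξ) ^ 2 := by
    have hn := intervalIntegral.norm_integral_le_integral_norm (f := fun ξ => u' ξ * E ξ) (μ := volume) hab
    refine hn.trans (le_of_eq ?_)
    apply intervalIntegral.integral_congr
    intro ξ hξ
    show ‖u' ξ * E ξ‖ = g' ξ / g ξ ^ 2
    rw [norm_mul, hEnorm, mul_one]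
    have h5 : ‖u' ξ‖ = |r' ξ| := by
      simp [hu']
    rw [h5, hr']
    rw [abs_div, abs_neg, _root_.abs_of_nonneg (hg'0 ξ hξ),
      _root_.abs_of_nonneg (sq_nonneg (g ξ))]
  have h3 : (∫ ξ in a..b, g' ξ / (g ξ) ^ 2) = r a - r b := by
    have hd : ∀ ξ ∈ Set.uIcc a b, HasDerivAt (fun ξ => -r ξ) (g' ξ / (g ξ) ^ 2) ξ := by
      intro ξ hξ
      have := (hrderiv ξ hξ).neg
      exact this.congr_deriv (by simp [hr', neg_div])
    have hint : IntervalIntegrable (fun ξ => g' ξ / (g ξ) ^ 2) volume a b := by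
      apply ContinuousOn.intervalIntegrable
      exact hg'c.div (hgc.pow 2) (fun ξ hξ => pow_ne_zero 2 (hgne ξ hξ))
    have := intervalIntegral.integral_eq_sub_of_hasDerivAt (fun ξ hξ => hd ξ hξ) hint
    rw [this]; ring
  have ha : a ∈ Set.uIcc a b := Set.left_mem_uIcc
  have hb : b ∈ Set.uIcc a b := Set.right_mem_uIcc
  have h4 : ‖∫ ξ in a..b, u' ξ * E ξ‖ ≤ 2 / δ := by
    refine h2.trans ?_
    rw [h3]
    have := hnormr a ha
    have := hnormr b hb
    have h1 := abs_le.mp (hnormr a ha)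
    have hb1 := abs_le.mp (hnormr b hb)
    have : (2:ℝ)/δ = 1/δ + 1/δ := by ring
    rw [this]
    linarith [h1.1, h1.2, hb1.1, hb1.2]
  calc ‖∫ ξ in a..b, E ξ‖
      = ‖u b * E b - u a * E a - ∫ ξ in a..b, u' ξ * E ξ‖ := by rw [hcongr, hibp]
    _ ≤ ‖u b * E b - u a * E a‖ + ‖∫ ξ in a..b, u' ξ * E ξ‖ := norm_sub_le _ _
    _ ≤ (‖u b * E b‖ + ‖u a * E a‖) + ‖∫ ξ in a..b, u' ξ * E ξ‖ := by
        gcongr; exact norm_sub_le _ _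
    _ ≤ (1/δ + 1/δ) + 2/δ := by
        have e1 : ‖u b * E b‖ ≤ 1/δ := by rw [norm_mul, hEnorm, mul_one]; exact hunorm b hb
        have e2 : ‖u a * E a‖ ≤ 1/δ := by rw [norm_mul, hEnorm, mul_one]; exact hunorm a ha
        linarith
    _ = 4 / δ := by ring


section
variable (α : ℝ)

lemma tlemA {α : ℝ} (hα : 1 < α) {s ξ : ℝ} (hξ : 0 < ξ)
    (h : ξ ≤ ((max 0 s) / (α+1)) ^ (α⁻¹)) : (α+1) * ξ ^ α ≤ s := by
  have hα0 : (0:ℝ) < α := by linarith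
  have hα1 : (0:ℝ) < α + 1 := by linarith
  have hs : 0 < max 0 s := by
    by_contra hc
    push_neg at hc
    have h0 : max 0 s = 0 := le_antisymm hc (le_max_left _ _)
    rw [h0] at h
    have : ((0:ℝ)/(α+1)) ^ (α⁻¹) = 0 := by
      rw [zero_div, Real.zero_rpow (by positivity)]
    rw [this] at h; linarith
  have hsp : 0 < s := by
    rcases le_or_gt s 0 with h1 | h1
    · exfalso; rw [max_eq_left h1] at hs; exact lt_irrefl _ hs
    · exact h1
  have hsmax : max 0 s = s := max_eq_right hsp.le
  rw [hsmax] at h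
  have h2 : ξ ^ α ≤ ((s / (α+1)) ^ (α⁻¹)) ^ α := Real.rpow_le_rpow hξ.le h hα0.le
  have h3 : ((s / (α+1)) ^ (α⁻¹)) ^ α = s / (α+1) := by
    rw [← Real.rpow_mul (by positivity), inv_mul_cancel₀ (ne_of_gt hα0), Real.rpow_one]
  rw [h3] at h2
  calc (α+1) * ξ ^ α ≤ (α+1) * (s/(α+1)) := by nlinarith
    _ = s := by field_simp

lemma tlemA' {α : ℝ} (hα : 1 < α) {s ξ : ℝ} (hξ : 0 < ξ)
    (h : ((max 0 s) / (α+1)) ^ (α⁻¹) ≤ ξ) : s ≤ (α+1) * ξ ^ α := by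
  have hα0 : (0:ℝ) < α := by linarith
  have hα1 : (0:ℝ) < α + 1 := by linarith
  rcases le_or_gt s 0 with hs | hs
  · have : 0 < (α+1) * ξ ^ α := by positivity
    linarith
  · have hsmax : max 0 s = s := max_eq_right hs.le
    rw [hsmax] at h
    have h2 : ((s / (α+1)) ^ (α⁻¹)) ^ α ≤ ξ ^ α :=
      Real.rpow_le_rpow (by positivity) h hα0.le
    have h3 : ((s / (α+1)) ^ (α⁻¹)) ^ α = s / (α+1) := by
      rw [← Real.rpow_mul (by positivity), inv_mul_cancel₀ (ne_of_gt hα0), Real.rpow_one]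
    rw [h3] at h2
    calc s = (α+1) * (s/(α+1)) := by field_simp
      _ ≤ (α+1) * ξ ^ α := by nlinarith
end


lemma key_pos {α : ℝ} (hα : 1 < α) (l a b : ℝ) (ha : 1 ≤ a) (hab : a ≤ b) :
    ‖∫ ξ in a..b, Complex.exp (Complex.I * ((l * ξ + ξ ^ (α+1) : ℝ) : ℂ))‖
      ≤ 10 * a ^ (-((α-1)/2)) := by
  have hα0 : (0:ℝ) < α := by linarith
  have hα1 : (0:ℝ) < α + 1 := by linarith
  have ha0 : (0:ℝ) < a := by linarith
  set φ : ℝ → ℝ := fun ξ => l * ξ + ξ ^ (α+1) with hφdef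
  set g : ℝ → ℝ := fun ξ => l + (α+1) * ξ ^ α with hgdef
  set g' : ℝ → ℝ := fun ξ => (α+1) * (α * ξ ^ (α-1)) with hg'def
  have hd1 : ∀ ξ : ℝ, 0 < ξ → HasDerivAt φ (g ξ) ξ := by
    intro ξ hξ
    have h1 : HasDerivAt (fun ξ : ℝ => ξ ^ (α+1)) ((α+1) * ξ ^ (α+1-1)) ξ :=
      Real.hasDerivAt_rpow_const (Or.inl (ne_of_gt hξ))
    have h2 : HasDerivAt (fun ξ : ℝ => l * ξ) l ξ := by
      simpa using (hasDerivAt_id ξ).const_mul l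
    have := h2.add h1
    have he : α + 1 - 1 = α := by ring
    rw [he] at this
    exact this
  have hd2 : ∀ ξ : ℝ, 0 < ξ → HasDerivAt g (g' ξ) ξ := by
    intro ξ hξ
    have h1 : HasDerivAt (fun ξ : ℝ => ξ ^ α) (α * ξ ^ (α-1)) ξ :=
      Real.hasDerivAt_rpow_const (Or.inl (ne_of_gt hξ))
    simpa [hgdef, hg'def] using (h1.const_mul (α+1)).const_add l
  have hφcont : Continuous φ := by
    apply Continuous.add
    · exact continuous_const.mul continuous_id
    · exact Real.continuous_rpow_const (by linarith)
  have hFcont : Continuous (fun ξ : ℝ => Complex.exp (Complex.I * ((φ ξ : ℝ) : ℂ))) := by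
    apply Complex.continuous_exp.comp
    exact continuous_const.mul (Complex.continuous_ofReal.comp hφcont)
  have hFint : ∀ x y : ℝ, IntervalIntegrable
      (fun ξ : ℝ => Complex.exp (Complex.I * ((φ ξ : ℝ) : ℂ))) volume x y :=
    fun x y => hFcont.intervalIntegrable x y
  set μ : ℝ := (α+1) * (α * a ^ (α-1)) with hμdef
  have haexp : (1:ℝ) ≤ a ^ (α-1) := by
    have := Real.rpow_le_rpow_of_exponent_le ha (show (0:ℝ) ≤ α - 1 by linarith)
    simpa using this
  have hμ2 : 2 ≤ μ := by
    have h1 : α ≤ α * a ^ (α-1) := le_mul_of_one_le_right hα0.le haexp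
    have h2 : (α+1) * 1 ≤ (α+1) * (α * a ^ (α-1)) :=
      mul_le_mul_of_nonneg_left (by linarith) hα1.le
    rw [hμdef]; linarith
  have hμ0 : 0 < μ := by linarith
  set δ : ℝ := Real.sqrt μ with hδdef
  have hδ0 : 0 < δ := Real.sqrt_pos.mpr hμ0
  have hδsq : δ ^ 2 = μ := Real.sq_sqrt hμ0.le
  set t : ℝ → ℝ := fun s => ((max 0 s) / (α+1)) ^ (α⁻¹) with htdef
  set c : ℝ := min b (max a (t (-δ-l))) with hcdef
  set d : ℝ := min b (max a (t (δ-l))) with hddef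
  have hac : a ≤ c := le_min hab (le_max_left _ _)
  have ht12 : t (-δ-l) ≤ t (δ-l) := by
    apply Real.rpow_le_rpow (by positivity) _ (by positivity)
    exact (div_le_div_iff_of_pos_right hα1).mpr (max_le_max le_rfl (by linarith))
  have hcd : c ≤ d := min_le_min le_rfl (max_le_max le_rfl ht12)
  have hdb : d ≤ b := min_le_left _ _
  -- the three pieces
  have hg'bound : ∀ ξ ∈ Set.Icc a b, μ ≤ g' ξ := by
    intro ξ hξ
    have h1 : a ^ (α-1) ≤ ξ ^ (α-1) := Real.rpow_le_rpow ha0.le hξ.1 (by linarith)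
    rw [hg'def, hμdef]
    simp only
    nlinarith
  have hg'0 : ∀ ξ ∈ Set.Icc a b, 0 ≤ g' ξ := fun ξ hξ => by
    have := hg'bound ξ hξ; linarith
  have hg'cont : Continuous g' := by
    apply Continuous.mul continuous_const
    exact Continuous.mul continuous_const (Real.continuous_rpow_const (by linarith))
  -- piece 1
  have hp1 : ‖∫ ξ in a..c, Complex.exp (Complex.I * ((φ ξ : ℝ) : ℂ))‖ ≤ 4/δ := by
    rcases eq_or_lt_of_le hac with heq | hlt
    · rw [← heq]
      simp [intervalIntegral.integral_same]
      positivity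
    · have hct : c ≤ t (-δ-l) := by
        have h1 : c ≤ max a (t (-δ-l)) := min_le_right _ _
        rcases max_cases a (t (-δ-l)) with ⟨h2, h3⟩ | ⟨h2, h3⟩
        · rw [h2] at h1; linarith
        · rw [h2] at h1; exact h1
      apply vdc1 hac hδ0 φ g g'
      · intro ξ hξ
        rw [Set.uIcc_of_le hac] at hξ
        exact hd1 ξ (by linarith [hξ.1])
      · intro ξ hξ
        rw [Set.uIcc_of_le hac] at hξ
        exact hd2 ξ (by linarith [hξ.1])
      · exact hg'cont.continuousOn
      · intro ξ hξ
        rw [Set.uIcc_of_le hac] at hξ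
        have := hg'bound ξ ⟨hξ.1, le_trans hξ.2 (le_trans hcd hdb)⟩
        linarith
      · intro ξ hξ
        rw [Set.uIcc_of_le hac] at hξ
        have hξ0 : 0 < ξ := by linarith [hξ.1]
        have h4 : (α+1) * ξ ^ α ≤ -δ - l := tlemA hα hξ0 (le_trans hξ.2 hct)
        have h5 : g ξ ≤ -δ := by rw [hgdef]; simp only; linarith
        calc δ ≤ -(g ξ) := by linarith
          _ ≤ |g ξ| := neg_le_abs _
  -- piece 3
  have hp3 : ‖∫ ξ in d..b, Complex.exp (Complex.I * ((φ ξ : ℝ) : ℂ))‖ ≤ 4/δ := by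
    rcases eq_or_lt_of_le hdb with heq | hlt
    · rw [heq]
      simp [intervalIntegral.integral_same]
      positivity
    · have htd : t (δ-l) ≤ d := by
        have h1 : d = max a (t (δ-l)) := by
          rcases min_cases b (max a (t (δ-l))) with ⟨h2, h3⟩ | ⟨h2, h3⟩
          · exfalso; rw [hddef] at hlt; rw [h2] at hlt; exact lt_irrefl _ hlt
          · exact h2
        rw [h1]; exact le_max_right _ _
      apply vdc1 hdb hδ0 φ g g'
      · intro ξ hξ
        rw [Set.uIcc_of_le hdb] at hξ
        exact hd1 ξ (by linarith [hξ.1, le_trans hac hcd])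
      · intro ξ hξ
        rw [Set.uIcc_of_le hdb] at hξ
        exact hd2 ξ (by linarith [hξ.1, le_trans hac hcd])
      · exact hg'cont.continuousOn
      · intro ξ hξ
        rw [Set.uIcc_of_le hdb] at hξ
        have := hg'bound ξ ⟨le_trans (le_trans hac hcd) hξ.1, hξ.2⟩
        linarith
      · intro ξ hξ
        rw [Set.uIcc_of_le hdb] at hξ
        have hξ0 : 0 < ξ := by linarith [hξ.1, le_trans hac hcd]
        have h4 : δ - l ≤ (α+1) * ξ ^ α := tlemA' hα hξ0 (le_trans htd hξ.1)
        have h5 : δ ≤ g ξ := by rw [hgdef]; simp only; linarith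
        exact le_trans h5 (le_abs_self _)
  -- piece 2
  have hp2 : ‖∫ ξ in c..d, Complex.exp (Complex.I * ((φ ξ : ℝ) : ℂ))‖ ≤ 2/δ := by
    have hb1 : ‖∫ ξ in c..d, Complex.exp (Complex.I * ((φ ξ : ℝ) : ℂ))‖ ≤ 1 * |d - c| := by
      apply intervalIntegral.norm_integral_le_of_norm_le_const
      intro ξ hξ
      simp [Complex.norm_exp]
    have hdc : d - c ≤ 2 * δ / μ := by
      rcases le_or_gt d c with h | h
      · have : 0 ≤ 2 * δ / μ := by positivity
        linarith
      · -- c < d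
        have hcb : c < b := lt_of_lt_of_le h hdb
        have hceq : c = max a (t (-δ-l)) := by
          rcases min_cases b (max a (t (-δ-l))) with ⟨h2, h3⟩ | ⟨h2, h3⟩
          · exfalso; rw [hcdef] at hcb; rw [h2] at hcb; exact lt_irrefl _ hcb
          · exact h2
        have hc0 : 0 < c := by linarith
        have hgc : -δ ≤ g c := by
          have h4 : -δ - l ≤ (α+1) * c ^ α :=
            tlemA' hα hc0 (by rw [hceq]; exact le_max_right _ _)
          rw [hgdef]; simp only; linarith
        have had : a < d := lt_of_le_of_lt hac h
        have hdt : d ≤ t (δ-l) := by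
          have h1 : d ≤ max a (t (δ-l)) := min_le_right _ _
          rcases max_cases a (t (δ-l)) with ⟨h2, h3⟩ | ⟨h2, h3⟩
          · exfalso; rw [h2] at h1; linarith
          · rw [h2] at h1; exact h1
        have hgd : g d ≤ δ := by
          have h4 : (α+1) * d ^ α ≤ δ - l := tlemA hα (by linarith) hdt
          rw [hgdef]; simp only; linarith
        -- MVT
        have hmvt : μ * (d - c) ≤ g d - g c := by
          apply Convex.mul_sub_le_image_sub_of_le_deriv (convex_Icc a b)
          · intro ξ hξ
            exact ((hd2 ξ (by linarith [hξ.1])).continuousAt).continuousWithinAt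
          · intro ξ hξ
            rw [interior_Icc] at hξ
            exact ((hd2 ξ (by linarith [hξ.1])).differentiableAt).differentiableWithinAt
          · intro ξ hξ
            rw [interior_Icc] at hξ
            rw [(hd2 ξ (by linarith [hξ.1])).deriv]
            exact hg'bound ξ ⟨hξ.1.le, hξ.2.le⟩
          · exact ⟨hac, le_trans hcd hdb⟩
          · exact ⟨le_trans hac hcd, hdb⟩
          · exact hcd
        have hfinal : μ * (d - c) ≤ 2 * δ := by linarith
        calc d - c = μ * (d-c) / μ := by field_simp
          _ ≤ 2 * δ / μ := (div_le_div_iff_of_pos_right hμ0).mpr hfinal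
    calc ‖∫ ξ in c..d, Complex.exp (Complex.I * ((φ ξ : ℝ) : ℂ))‖
        ≤ 1 * |d - c| := hb1
      _ = d - c := by rw [one_mul, _root_.abs_of_nonneg (by linarith : (0:ℝ) ≤ d - c)]
      _ ≤ 2 * δ / μ := hdc
      _ = 2 / δ := by rw [← hδsq]; field_simp
  -- assemble
  have h1 := intervalIntegral.integral_add_adjacent_intervals (hFint a c) (hFint c d)
  have h2 := intervalIntegral.integral_add_adjacent_intervals (hFint a d) (hFint d b)
  have hsplit : (∫ ξ in a..b, Complex.exp (Complex.I * ((φ ξ : ℝ) : ℂ)))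
      = (∫ ξ in a..c, Complex.exp (Complex.I * ((φ ξ : ℝ) : ℂ)))
        + (∫ ξ in c..d, Complex.exp (Complex.I * ((φ ξ : ℝ) : ℂ)))
        + (∫ ξ in d..b, Complex.exp (Complex.I * ((φ ξ : ℝ) : ℂ))) := by
    rw [h1, h2]
  have htotal : ‖∫ ξ in a..b, Complex.exp (Complex.I * ((φ ξ : ℝ) : ℂ))‖ ≤ 10 / δ := by
    rw [hsplit]
    calc ‖_ + _ + _‖ ≤ ‖(_ : ℂ) + _‖ + ‖(_ : ℂ)‖ := norm_add_le _ _
      _ ≤ (‖(_ : ℂ)‖ + ‖(_ : ℂ)‖) + ‖(_ : ℂ)‖ := by gcongr; exact norm_add_le _ _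
      _ ≤ (4/δ + 2/δ) + 4/δ := by gcongr
      _ = 10/δ := by ring
  refine htotal.trans ?_
  have hμge : a ^ (α-1) ≤ μ := by
    have hx : 0 < a ^ (α-1) := Real.rpow_pos_of_pos ha0 _
    have e1 : a ^ (α-1) ≤ α * a ^ (α-1) := le_mul_of_one_le_left hx.le (by linarith)
    have e2 : α * a ^ (α-1) ≤ (α+1) * (α * a ^ (α-1)) :=
      le_mul_of_one_le_left (by positivity) (by linarith)
    rw [hμdef]; linarith
  have hsq : Real.sqrt (a ^ (α-1)) = a ^ ((α-1)/2) := by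
    rw [Real.sqrt_eq_rpow, ← Real.rpow_mul ha0.le]
    congr 1
    ring
  have hδge : a ^ ((α-1)/2) ≤ δ := by
    rw [← hsq, hδdef]
    exact Real.sqrt_le_sqrt hμge
  have hpow0 : 0 < a ^ ((α-1)/2) := Real.rpow_pos_of_pos ha0 _
  have : (10:ℝ)/δ ≤ 10 / a ^ ((α-1)/2) := by
    apply div_le_div_of_nonneg_left (by norm_num) hpow0 hδge
  refine this.trans (le_of_eq ?_)
  rw [Real.rpow_neg ha0.le]
  field_simp

noncomputable def itg (α l : ℝ) (ξ : ℝ) : ℂ :=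
  (Real.sign ξ : ℂ) *
    Complex.exp (-Complex.I * (Real.sign ξ : ℂ) * ((Real.pi / 4 : ℝ) : ℂ)) *
    Complex.exp (Complex.I * ((l * ξ + ξ * |ξ| ^ α : ℝ) : ℂ))

lemma sign_measurable : Measurable Real.sign := by
  unfold Real.sign
  exact Measurable.ite (measurableSet_lt measurable_id measurable_const) measurable_const
    (Measurable.ite (measurableSet_lt measurable_const measurable_id)
      measurable_const measurable_const)

lemma itg_meas {α : ℝ} (hα : 0 ≤ α) (l : ℝ) : Measurable (itg α l) := by
  unfold itg
  apply Measurable.mul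
  apply Measurable.mul
  · exact Complex.measurable_ofReal.comp sign_measurable
  · apply Complex.continuous_exp.measurable.comp
    apply Measurable.mul
    · exact (Complex.measurable_ofReal.comp sign_measurable).const_mul (-Complex.I)
    · exact measurable_const
  · apply Complex.continuous_exp.measurable.comp
    apply Measurable.const_mul
    apply Complex.measurable_ofReal.comp
    apply Measurable.add
    · exact measurable_id.const_mul l
    · exact measurable_id.mul ((Real.continuous_rpow_const hα).measurable.comp (measurable_norm (α := ℝ)))

lemma exp_I_real_norm (x : ℝ) : ‖Complex.exp (Complex.I * (x : ℂ))‖ = 1 := by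
  simp [Complex.norm_exp]

lemma itg_norm (α l : ℝ) (ξ : ℝ) : ‖itg α l ξ‖ ≤ 1 := by
  unfold itg
  rw [norm_mul, norm_mul]
  have h1 : ‖(Real.sign ξ : ℂ)‖ ≤ 1 := by
    rw [Complex.norm_real]
    unfold Real.sign
    split <;> simp <;> split <;> simp
  have h2 : ‖Complex.exp (-Complex.I * (Real.sign ξ : ℂ) * ((Real.pi / 4 : ℝ) : ℂ))‖ = 1 := by
    rw [Complex.norm_exp]
    have : (-Complex.I * (Real.sign ξ : ℂ) * ((Real.pi / 4 : ℝ) : ℂ)).re = 0 := by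
      simp [Complex.mul_re, Complex.mul_im]
    rw [this, Real.exp_zero]
  have h3 : ‖Complex.exp (Complex.I * ((l * ξ + ξ * |ξ| ^ α : ℝ) : ℂ))‖ = 1 :=
    exp_I_real_norm _
  rw [h2, h3]
  simpa using h1

lemma itg_intble {α : ℝ} (hα : 0 ≤ α) (l : ℝ) (x y : ℝ) : IntervalIntegrable (itg α l) volume x y := by
  constructor <;>
  · apply Integrable.mono' (integrable_const (1:ℝ))
      ((itg_meas hα l).aestronglyMeasurable.restrict)
    exact Filter.Eventually.of_forall (itg_norm α l)

lemma intervalIntegral_conj {f : ℝ → ℂ} {a b : ℝ} :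
    (∫ x in a..b, (starRingEnd ℂ) (f x)) = (starRingEnd ℂ) (∫ x in a..b, f x) := by
  rw [intervalIntegral, intervalIntegral, map_sub, integral_conj, integral_conj]

lemma itg_pos_side {α : ℝ} (hα : 1 < α) (l a b : ℝ) (ha : 1 ≤ a) (hab : a ≤ b) :
    ‖∫ ξ in a..b, itg α l ξ‖ ≤ 10 * a ^ (-((α-1)/2)) := by
  have hcongr : (∫ ξ in a..b, itg α l ξ)
      = ∫ ξ in a..b, Complex.exp (-Complex.I * ((Real.pi / 4 : ℝ) : ℂ)) *
          Complex.exp (Complex.I * ((l * ξ + ξ ^ (α+1) : ℝ) : ℂ)) := by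
    apply intervalIntegral.integral_congr
    intro ξ hξ
    rw [Set.uIcc_of_le hab] at hξ
    have hξ0 : 0 < ξ := by linarith [hξ.1]
    unfold itg
    rw [Real.sign_of_pos hξ0, abs_of_pos hξ0]
    have : ξ * ξ ^ α = ξ ^ (α + 1) := by
      rw [Real.rpow_add_one (ne_of_gt hξ0)]; ring
    rw [this]
    push_cast
    ring_nf
  rw [hcongr, intervalIntegral.integral_const_mul, norm_mul]
  have h1 : ‖Complex.exp (-Complex.I * ((Real.pi / 4 : ℝ) : ℂ))‖ = 1 := by
    rw [Complex.norm_exp]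
    have : (-Complex.I * ((Real.pi / 4 : ℝ) : ℂ)).re = 0 := by
      simp [Complex.mul_re]
    rw [this, Real.exp_zero]
  rw [h1, one_mul]
  exact key_pos hα l a b ha hab

lemma itg_neg_side {α : ℝ} (hα : 1 < α) (l a b : ℝ) (ha : 1 ≤ a) (hab : a ≤ b) :
    ‖∫ ξ in (-b)..(-a), itg α l ξ‖ ≤ 10 * a ^ (-((α-1)/2)) := by
  rw [← intervalIntegral.integral_comp_neg (fun ξ => itg α l ξ)]
  have hcongr : (∫ ξ in a..b, itg α l (-ξ))
      = ∫ ξ in a..b, (-Complex.exp (Complex.I * ((Real.pi / 4 : ℝ) : ℂ))) *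
          (starRingEnd ℂ) (Complex.exp (Complex.I * ((l * ξ + ξ ^ (α+1) : ℝ) : ℂ))) := by
    apply intervalIntegral.integral_congr
    intro ξ hξ
    rw [Set.uIcc_of_le hab] at hξ
    have hξ0 : 0 < ξ := by linarith [hξ.1]
    show itg α l (-ξ) = (-Complex.exp (Complex.I * ((Real.pi / 4 : ℝ) : ℂ))) *
          (starRingEnd ℂ) (Complex.exp (Complex.I * ((l * ξ + ξ ^ (α+1) : ℝ) : ℂ)))
    unfold itg
    rw [Real.sign_of_neg (by linarith : -ξ < 0), abs_neg, abs_of_pos hξ0]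
    have h2 : l * (-ξ) + (-ξ) * ξ ^ α = -(l * ξ + ξ ^ (α+1)) := by
      rw [Real.rpow_add_one (ne_of_gt hξ0)]; ring
    rw [h2, ← Complex.exp_conj]
    have h3 : (starRingEnd ℂ) (Complex.I * ((l * ξ + ξ ^ (α+1) : ℝ) : ℂ))
        = Complex.I * ((-(l * ξ + ξ ^ (α+1)) : ℝ) : ℂ) := by
      rw [map_mul, Complex.conj_I, Complex.conj_ofReal]
      push_cast
      ring
    rw [← h3]
    push_cast
    ring_nf
  rw [hcongr, intervalIntegral.integral_const_mul, norm_mul, intervalIntegral_conj]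
  have h1 : ‖-Complex.exp (Complex.I * ((Real.pi / 4 : ℝ) : ℂ))‖ = 1 := by
    rw [norm_neg]; exact exp_I_real_norm _
  rw [h1, one_mul, RCLike.norm_conj]
  exact key_pos hα l a b ha hab

lemma itg_diff {α : ℝ} (hα : 1 < α) (l R R' : ℝ) (hR : 1 ≤ R) (hRR' : R ≤ R') :
    ‖(∫ ξ in (-R')..R', itg α l ξ) - ∫ ξ in (-R)..R, itg α l ξ‖
      ≤ 20 * R ^ (-((α-1)/2)) := by
  have hα0 : (0:ℝ) ≤ α := by linarith
  have h1 := intervalIntegral.integral_add_adjacent_intervals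
    (itg_intble hα0 l (-R') (-R)) (itg_intble hα0 l (-R) R')
  have h2 := intervalIntegral.integral_add_adjacent_intervals
    (itg_intble hα0 l (-R) R) (itg_intble hα0 l R R')
  have key : (∫ ξ in (-R')..R', itg α l ξ) - (∫ ξ in (-R)..R, itg α l ξ)
      = (∫ ξ in (-R')..(-R), itg α l ξ) + ∫ ξ in R..R', itg α l ξ := by
    rw [← h1, ← h2]; ring
  rw [key]
  have e1 := itg_neg_side hα l R R' hR hRR'
  have e2 := itg_pos_side hα l R R' hR hRR'
  calc ‖_ + _‖ ≤ ‖(_ : ℂ)‖ + ‖(_ : ℂ)‖ := norm_add_le _ _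
    _ ≤ 10 * R ^ (-((α-1)/2)) + 10 * R ^ (-((α-1)/2)) := by gcongr
    _ = 20 * R ^ (-((α-1)/2)) := by ring

lemma itg_cocompact {α : ℝ} (hα : 1 < α) (A : ℝ) (hA : 1 ≤ A) :
    Tendsto (fun l : ℝ => ∫ ξ in (-A)..A, itg α l ξ) (cocompact ℝ) (nhds 0) := by
  have h2π : (-(2*Real.pi)⁻¹ : ℝ) ≠ 0 := by
    have := Real.pi_pos; intro h; rw [neg_eq_zero, inv_eq_zero] at h; linarith
  set g : ℝ → ℂ := Set.indicator (Set.Ioc (-A) A) (fun ξ =>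
    (Real.sign ξ : ℂ) *
      Complex.exp (-Complex.I * (Real.sign ξ : ℂ) * ((Real.pi / 4 : ℝ) : ℂ)) *
      Complex.exp (Complex.I * ((ξ * |ξ| ^ α : ℝ) : ℂ))) with hg
  have hhom : Tendsto (fun l : ℝ => l * (-(2*Real.pi)⁻¹)) (cocompact ℝ) (cocompact ℝ) :=
    (Homeomorph.mulRight₀ (-(2*Real.pi)⁻¹) h2π).toCocompactMap.cocompact_tendsto'
  have hstep := (Real.tendsto_integral_exp_smul_cocompact g).comp hhom
  apply hstep.congr
  intro l
  show (∫ v : ℝ, (Real.fourierChar (-(v * (l * (-(2*Real.pi)⁻¹))))) • g v)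
      = ∫ ξ in (-A)..A, itg α l ξ
  calc (∫ v : ℝ, (Real.fourierChar (-(v * (l * (-(2*Real.pi)⁻¹))))) • g v)
      = ∫ v : ℝ, Set.indicator (Set.Ioc (-A) A) (fun v => itg α l v) v := by
        congr 1
        funext v
        by_cases hv : v ∈ Set.Ioc (-A) A
        · rw [hg, Set.indicator_of_mem hv, Set.indicator_of_mem hv, Circle.smul_def,
            Real.fourierChar_apply]
          have harg : ((2 * Real.pi * (-(v * (l * (-(2*Real.pi)⁻¹)))) : ℝ) : ℂ)
              = ((l * v : ℝ) : ℂ) := by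
            have h1 := Real.pi_ne_zero
            have h2 : (Real.pi : ℂ) ≠ 0 := Complex.ofReal_ne_zero.mpr h1
            push_cast
            field_simp
          rw [harg]
          unfold itg
          have hsplit : (Complex.I * ((l * v + v * |v| ^ α : ℝ) : ℂ))
              = ((l * v : ℝ) : ℂ) * Complex.I + Complex.I * ((v * |v| ^ α : ℝ) : ℂ) := by
            push_cast
            ring
          rw [hsplit, Complex.exp_add, smul_eq_mul]
          ring
        · rw [hg, Set.indicator_of_notMem hv, Set.indicator_of_notMem hv, smul_zero]
    _ = ∫ v in Set.Ioc (-A) A, itg α l v := integral_indicator measurableSet_Ioc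
    _ = ∫ ξ in (-A)..A, itg α l ξ := (intervalIntegral.integral_of_le (by linarith)).symm


end Aux

/-- For `α > 1`, the improper Riemann integral
`F₃(λ) = lim_{R→∞} ∫_{-R}^{R} sgn ξ · e^{-i·sgn ξ·π/4} e^{i(λξ + ξ|ξ|^α)} dξ`
exists for every `λ`; the function `F₃` is continuous and tends to `0` as `|λ| → ∞`. -/
theorem threeD_profile_exists_continuous_decay (α : ℝ) (hα : 1 < α) :
    ∃ F₃ : ℝ → ℂ,
      (∀ l : ℝ,
        Tendsto
          (fun R : ℝ => ∫ ξ in (-R)..R,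
            (Real.sign ξ : ℂ) *
              Complex.exp (-Complex.I * (Real.sign ξ : ℂ) * ((Real.pi / 4 : ℝ) : ℂ)) *
              Complex.exp (Complex.I * ((l * ξ + ξ * |ξ| ^ α : ℝ) : ℂ)))
          atTop (nhds (F₃ l))) ∧
      Continuous F₃ ∧
      Tendsto F₃ (cocompact ℝ) (nhds 0) := by
  have hα0 : (0:ℝ) ≤ α := by linarith
  have hβ : (0:ℝ) < (α-1)/2 := by linarith
  set u : ℝ → ℝ → ℂ := fun l R => ∫ ξ in (-R)..R, itg α l ξ with hu
  have htend0 : Tendsto (fun R : ℝ => 20 * R ^ (-((α-1)/2))) atTop (nhds 0) := by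
    have h1 : Tendsto (fun R : ℝ => R ^ (-((α-1)/2))) atTop (nhds 0) := by
      apply tendsto_rpow_neg_atTop hβ
    have := h1.const_mul (20:ℝ)
    simpa using this
  have hcauchy : ∀ l : ℝ, ∃ z : ℂ, Tendsto (fun R => u l R) atTop (nhds z) := by
    intro l
    apply cauchySeq_tendsto_of_complete
    rw [Metric.cauchySeq_iff]
    intro ε hε
    obtain ⟨N₀, hN₀⟩ := eventually_atTop.mp (htend0.eventually (gt_mem_nhds hε))
    refine ⟨max 1 N₀, fun m hm n hn => ?_⟩
    have hm1 : 1 ≤ m := le_trans (le_max_left _ _) hm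
    have hn1 : 1 ≤ n := le_trans (le_max_left _ _) hn
    rcases le_total m n with h | h
    · rw [dist_eq_norm, norm_sub_rev]
      calc ‖u l n - u l m‖ ≤ 20 * m ^ (-((α-1)/2)) := itg_diff hα l m n hm1 h
        _ < ε := hN₀ m (le_trans (le_max_right _ _) hm)
    · rw [dist_eq_norm]
      calc ‖u l m - u l n‖ ≤ 20 * n ^ (-((α-1)/2)) := itg_diff hα l n m hn1 h
        _ < ε := hN₀ n (le_trans (le_max_right _ _) hn)
  choose F₃ hF₃ using hcauchy
  have hunif : ∀ (l R : ℝ), 1 ≤ R → ‖u l R - F₃ l‖ ≤ 20 * R ^ (-((α-1)/2)) := by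
    intro l R hR
    have h1 : Tendsto (fun R' => ‖u l R - u l R'‖) atTop (nhds ‖u l R - F₃ l‖) :=
      (tendsto_const_nhds.sub (hF₃ l)).norm
    apply le_of_tendsto h1
    filter_upwards [eventually_ge_atTop R] with R' hR'
    rw [norm_sub_rev]
    exact itg_diff hα l R R' hR hR'
  have htu : TendstoUniformly (fun R l => u l R) F₃ atTop := by
    rw [Metric.tendstoUniformly_iff]
    intro ε hε
    filter_upwards [htend0.eventually (gt_mem_nhds hε), eventually_ge_atTop (1:ℝ)]
      with R h1 h2 l
    rw [dist_comm, dist_eq_norm]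
    exact lt_of_le_of_lt (hunif l R h2) h1
  have hcontR : ∀ R : ℝ, 1 ≤ R → Continuous (fun l => u l R) := by
    intro R hR
    have heq : (fun l => u l R) = fun l => ∫ ξ in Set.Ioc (-R) R, itg α l ξ :=
      funext fun l => intervalIntegral.integral_of_le (by linarith)
    rw [heq]
    apply MeasureTheory.continuous_of_dominated (bound := fun _ => (1:ℝ))
    · intro l
      exact (itg_meas hα0 l).aestronglyMeasurable.restrict
    · intro l
      exact Filter.Eventually.of_forall (itg_norm α l)
    · exact integrableOn_const measure_Ioc_lt_top.ne
    · apply Filter.Eventually.of_forall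
      intro ξ
      unfold itg
      apply Continuous.mul continuous_const
      apply Complex.continuous_exp.comp
      apply Continuous.mul continuous_const
      apply Complex.continuous_ofReal.comp
      exact (continuous_id.mul continuous_const).add continuous_const
  have hcont : Continuous F₃ := by
    apply htu.continuous
    exact ((eventually_ge_atTop (1:ℝ)).mono fun R hR => hcontR R hR).frequently
  refine ⟨F₃, fun l => hF₃ l, hcont, ?_⟩
  rw [Metric.tendsto_nhds]
  intro ε hε
  obtain ⟨A, hA2, hA1⟩ := ((htend0.eventually (gt_mem_nhds (half_pos hε))).and
    (eventually_ge_atTop (1:ℝ))).exists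
  have hRL : Tendsto (fun l : ℝ => u l A) (cocompact ℝ) (nhds 0) := itg_cocompact hα A hA1
  have hball : ∀ᶠ l in cocompact ℝ, ‖u l A‖ < ε/2 := by
    have := hRL.eventually (Metric.ball_mem_nhds (0:ℂ) (half_pos hε))
    filter_upwards [this] with l hl
    simpa [dist_eq_norm] using hl
  filter_upwards [hball] with l hl
  rw [dist_eq_norm, sub_zero]
  calc ‖F₃ l‖ ≤ ‖F₃ l - u l A‖ + ‖u l A‖ := by
        have := norm_add_le (F₃ l - u l A) (u l A)
        simpa using this
    _ ≤ 20 * A ^ (-((α-1)/2)) + ‖u l A‖ := by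
        rw [norm_sub_rev]
        gcongr
        exact hunif l A hA1
    _ < ε/2 + ε/2 := by linarith
    _ = ε := by ring
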